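/- Let G be a connected simple graph on n vertices. Then there exists a vertex assignment c : V(G) → {1, ..., 2^n - 1} with Σ_{v ∈ V(G)} c(v) = 2^n - 1 such that for every simple graph G' on n vertices and every vertex assignment c' : V(G') → ℤ⁺, if S(G,c) = S(G',c') then G is isomorphic to G'. -/

import Mathlib

lemma stp' (m : ℕ) : ∑ i ∈ Finset.range m, 2^i = 2^m - 1 := by
  induction m with
  | zero => simp
  | succ k ih =>
    rw [Finset.sum_range_succ, ih]
    have h1 : 1 ≤ 2^k := Nat.one_le_two_pow
    have h2 : 2^(k+1) = 2^k * 2 := pow_succ 2 k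
    omega

lemma two_pow_sum_inj_aux : ∀ (M : ℕ) (u w : Finset ℕ), (∀ i ∈ u, i < M) → (∀ i ∈ w, i < M) →
    ∑ i ∈ u, 2^i = ∑ i ∈ w, 2^i → u = w := by
  intro M
  induction M with
  | zero =>
    intro u w hu hw _
    rw [Finset.eq_empty_of_forall_notMem (fun i hi => absurd (hu i hi) (by omega)),
      Finset.eq_empty_of_forall_notMem (fun i hi => absurd (hw i hi) (by omega))]
  | succ M ih =>
    intro u w hu hw hsum
    have hbig : ∀ (a b : Finset ℕ), (∀ i ∈ a, i < M + 1) → M ∈ a → M ∉ b → (∀ i ∈ b, i < M + 1) →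
        ∑ i ∈ a, 2^i = ∑ i ∈ b, 2^i → False := by
      intro a b ha hMa hMb hb h
      have h1 : (2:ℕ)^M ≤ ∑ i ∈ a, 2^i := Finset.single_le_sum (fun i _ => Nat.zero_le _) hMa
      have h2 : ∑ i ∈ b, 2^i ≤ 2^M - 1 := by
        rw [← stp']
        exact Finset.sum_le_sum_of_subset (fun i hi => Finset.mem_range.2 (by
          have := hb i hi
          have : i ≠ M := fun he => hMb (he ▸ hi)
          omega))
      have : 1 ≤ 2^M := Nat.one_le_two_pow
      omega
    by_cases hMu : M ∈ u <;> by_cases hMw : M ∈ w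
    · have h1 := Finset.add_sum_erase u (fun i => 2^i) hMu
      have h2 := Finset.add_sum_erase w (fun i => 2^i) hMw
      beta_reduce at h1 h2
      have he : u.erase M = w.erase M := by
        refine ih _ _ (fun i hi => ?_) (fun i hi => ?_) (by omega)
        · have := hu i (Finset.mem_of_mem_erase hi)
          have := Finset.ne_of_mem_erase hi
          omega
        · have := hw i (Finset.mem_of_mem_erase hi)
          have := Finset.ne_of_mem_erase hi
          omega
      rw [← Finset.insert_erase hMu, ← Finset.insert_erase hMw, he]
    · exact absurd hsum (fun h => hbig u w hu hMu hMw hw h)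
    · exact absurd hsum.symm (fun h => hbig w u hw hMw hMu hu h)
    · refine ih _ _ (fun i hi => ?_) (fun i hi => ?_) hsum
      · have := hu i hi; have : i ≠ M := fun he => hMu (he ▸ hi); omega
      · have := hw i hi; have : i ≠ M := fun he => hMw (he ▸ hi); omega

lemma two_pow_finset_inj (u w : Finset ℕ) (h : ∑ i ∈ u, 2^i = ∑ i ∈ w, 2^i) : u = w := by
  refine two_pow_sum_inj_aux ((u ∪ w).sup id + 1) u w (fun i hi => ?_) (fun i hi => ?_) h
  · exact Nat.lt_succ_of_le (Finset.le_sup (f := id) (Finset.mem_union_left _ hi))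
  · exact Nat.lt_succ_of_le (Finset.le_sup (f := id) (Finset.mem_union_right _ hi))

lemma sum_two_pow_inj {α : Type*} [DecidableEq α] {g : α → ℕ} (hg : Function.Injective g)
    (s t : Finset α) (h : ∑ a ∈ s, 2^(g a) = ∑ a ∈ t, 2^(g a)) : s = t := by
  apply Finset.image_injective hg
  apply two_pow_finset_inj
  rw [Finset.sum_image (fun x _ y _ hxy => hg hxy), Finset.sum_image (fun x _ y _ hxy => hg hxy)]
  exact h

lemma induce_singleton_connected {α : Type*} (G : SimpleGraph α) (a : α) :
    (G.induce ({a} : Set α)).Connected := by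
  rw [SimpleGraph.connected_iff]
  refine ⟨?_, ⟨⟨a, rfl⟩⟩⟩
  rintro ⟨x, hx⟩ ⟨y, hy⟩
  have : x = y := by
    rw [Set.mem_singleton_iff] at hx hy; rw [hx, hy]
  subst this
  rfl

lemma induce_pair_connected_iff {α : Type*} (G : SimpleGraph α) {a b : α} (hab : a ≠ b) :
    (G.induce ({a, b} : Set α)).Connected ↔ G.Adj a b := by
  constructor
  · intro h
    have ha : a ∈ ({a, b} : Set α) := Or.inl rfl
    have hb : b ∈ ({a, b} : Set α) := Or.inr rfl
    obtain ⟨p⟩ := h.preconnected ⟨a, ha⟩ ⟨b, hb⟩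
    cases p with
    | nil => exact absurd rfl hab
    | cons h' p' =>
      rename_i v
      have hadj : G.Adj a v.1 := h'
      rcases v.2 with h1 | h1
      · exact absurd (h1 ▸ hadj) (G.irrefl)
      · exact h1 ▸ hadj
  · intro h
    rw [SimpleGraph.connected_iff]
    refine ⟨?_, ⟨⟨a, Or.inl rfl⟩⟩⟩
    have key : (G.induce ({a,b} : Set α)).Reachable ⟨a, Or.inl rfl⟩ ⟨b, Or.inr rfl⟩ :=
      SimpleGraph.Adj.reachable (by exact h)
    rintro ⟨x, hx⟩ ⟨y, hy⟩
    rcases hx with h1 | h1 <;> rcases hy with h2 | h2 <;> subst h1 <;> subst h2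
    · rfl
    · exact key
    · exact key.symm
    · rfl

lemma exists_sdr {α : Type*} [DecidableEq α] [Nonempty α] (w : α → ℕ) :
    ∀ (k : ℕ) (A : ℕ → Finset α), (∀ j, j < k → ∑ a ∈ A j, w a = 2^j) →
    ∃ x : ℕ → α, (∀ j < k, x j ∈ A j) ∧ (∀ j < k, ∀ i < j, x j ∉ A i) := by
  intro k
  induction k with
  | zero => exact fun A _ => ⟨fun _ => Classical.arbitrary α, by omega, by omega⟩
  | succ k ih =>
    intro A hA
    obtain ⟨x, hx1, hx2⟩ := ih A (fun j hj => hA j (by omega))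
    have hex : ∃ a ∈ A k, ∀ i < k, a ∉ A i := by
      by_contra hcon
      push_neg at hcon
      have hsub : A k ⊆ (Finset.range k).biUnion A := by
        intro a ha
        obtain ⟨i, hi, hai⟩ := hcon a ha
        exact Finset.mem_biUnion.2 ⟨i, Finset.mem_range.2 hi, hai⟩
      have h1 : ∑ a ∈ A k, w a ≤ ∑ a ∈ (Finset.range k).biUnion A, w a :=
        Finset.sum_le_sum_of_subset hsub
      have h2 : ∀ (s : Finset ℕ), ∑ a ∈ s.biUnion A, w a ≤ ∑ i ∈ s, ∑ a ∈ A i, w a := by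
        intro s
        induction s using Finset.induction with
        | empty => simp
        | insert _ _ hnotmem ih2 =>
          rename_i b s'
          rw [Finset.biUnion_insert, Finset.sum_insert hnotmem]
          have := Finset.sum_union_inter (s₁ := A b) (s₂ := s'.biUnion A) (f := w)
          omega
      have h3 := h2 (Finset.range k)
      have h4 : ∑ i ∈ Finset.range k, ∑ a ∈ A i, w a = 2^k - 1 := by
        have : ∀ i ∈ Finset.range k, ∑ a ∈ A i, w a = 2^i :=
          fun i hi => hA i (by have := Finset.mem_range.1 hi; omega)
        rw [Finset.sum_congr rfl this, stp']
      rw [hA k (by omega)] at h1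
      have h5 : 1 ≤ 2^k := Nat.one_le_two_pow
      omega
    obtain ⟨a, ha, hnot⟩ := hex
    refine ⟨Function.update x k a, fun j hj => ?_, fun j hj i hi => ?_⟩
    · rcases Nat.lt_or_ge j k with h | h
      · rw [Function.update_of_ne (by omega)]; exact hx1 j h
      · have : j = k := by omega
        subst this
        rw [Function.update_self]; exact ha
    · rcases Nat.lt_or_ge j k with h | h
      · rw [Function.update_of_ne (by omega)]; exact hx2 j h i hi
      · have : j = k := by omega
        subst this
        rw [Function.update_self]; exact hnot i hi

/-- The set of connected subgraph sums of `G` with vertex assignment `c`. -/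
def connSums {V : Type*} [Fintype V] (G : SimpleGraph V) (c : V → ℕ) : Set ℕ :=
  {N | ∃ s : Finset V, s.Nonempty ∧ (G.induce (↑s : Set V)).Connected ∧ ∑ v ∈ s, c v = N}

/-- For every connected graph `G` on `n` vertices there is an assignment
`c : V(G) → {1, …, 2^n - 1}` with total sum `2^n - 1` whose collection of connected
subgraph sums determines `G` among all `n`-vertex graphs. -/
theorem stmt_0 {V : Type} [Fintype V] (n : ℕ) (hn : Fintype.card V = n)
    (G : SimpleGraph V) (hG : G.Connected) :
    ∃ c : V → ℕ, (∀ v, 1 ≤ c v ∧ c v ≤ 2 ^ n - 1) ∧ (∑ v, c v = 2 ^ n - 1) ∧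
      ∀ (V' : Type) (_ : Fintype V') (G' : SimpleGraph V') (c' : V' → ℕ),
        Fintype.card V' = n → (∀ v, 0 < c' v) →
        connSums G c = connSums G' c' → Nonempty (G ≃g G') := by
  classical
  have hne : Nonempty V := hG.nonempty
  have hn0 : 0 < n := hn ▸ Fintype.card_pos_iff.2 hne
  have e : V ≃ Fin n := Fintype.equivFinOfCardEq hn
  set c : V → ℕ := fun v => 2^((e v : ℕ)) with hcdef
  have hge : ∀ v, (e v : ℕ) < n := fun v => (e v).isLt
  have hsumc : ∑ v, c v = 2^n - 1 := by
    have h1 : ∑ v, c v = ∑ j : Fin n, 2^((j : ℕ)) := Equiv.sum_comp e (fun j : Fin n => 2^((j:ℕ)))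
    rw [h1, Fin.sum_univ_eq_sum_range (fun i => 2^i) n, stp']
  have injG : ∀ s t : Finset V, ∑ v ∈ s, c v = ∑ v ∈ t, c v → s = t := by
    intro s t h
    exact sum_two_pow_inj (g := fun v => (e v : ℕ))
      (fun a b hab => e.injective (Fin.val_injective hab)) s t h
  have hsing : ∀ j : Fin n, (2^((j:ℕ)) : ℕ) ∈ connSums G c := by
    intro j
    refine ⟨{e.symm j}, Finset.singleton_nonempty _, ?_, ?_⟩
    · rw [Finset.coe_singleton]; exact induce_singleton_connected G _
    · rw [Finset.sum_singleton]
      show 2^((e (e.symm j) : ℕ)) = 2^((j:ℕ))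
      rw [e.apply_symm_apply]
  have htop : (2^n - 1 : ℕ) ∈ connSums G c := by
    refine ⟨Finset.univ, Finset.univ_nonempty, ?_, hsumc⟩
    rw [Finset.coe_univ]
    exact (SimpleGraph.induceUnivIso G).connected_iff.2 hG
  refine ⟨c, ?_, hsumc, ?_⟩
  · intro v
    constructor
    · exact Nat.one_le_two_pow
    · have h1 : (e v : ℕ) + 1 ≤ n := hge v
      have h2 : (2:ℕ)^((e v : ℕ) + 1) ≤ 2^n := Nat.pow_le_pow_right (by norm_num) h1
      have h3 : (2:ℕ)^((e v : ℕ) + 1) = 2^((e v : ℕ)) * 2 := pow_succ 2 _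
      have h4 : 1 ≤ (2:ℕ)^((e v : ℕ)) := Nat.one_le_two_pow
      show 2^((e v : ℕ)) ≤ 2^n - 1
      omega
  intro V' iV' G' c' hcard' _hpos' hEq
  haveI hneV' : Nonempty V' := Fintype.card_pos_iff.1 (by omega)
  -- realizers of the powers of two in G'
  have hreal : ∀ j, j < n →
      ∃ s : Finset V', (G'.induce (↑s : Set V')).Connected ∧ ∑ v ∈ s, c' v = 2^j := by
    intro j hj
    have hmem : (2^j : ℕ) ∈ connSums G' c' := by
      rw [← hEq]
      exact hsing ⟨j, hj⟩
    obtain ⟨s, _, h1, h2⟩ := hmem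
    exact ⟨s, h1, h2⟩
  choose A hA1 hA2 using hreal
  set B : ℕ → Finset V' := fun j => if h : j < n then A j h else ∅ with hBdef
  have hB : ∀ j, j < n → ∑ a ∈ B j, c' a = 2^j := by
    intro j hj
    simp only [hBdef, dif_pos hj]
    exact hA2 j hj
  obtain ⟨x, hx1, hx2⟩ := exists_sdr c' n B hB
  have hXinj : Function.Injective (fun j : Fin n => x (j : ℕ)) := by
    intro j1 j2 hxe
    simp only at hxe
    by_contra hnej
    rcases lt_trichotomy (j1 : ℕ) (j2 : ℕ) with h | h | h
    · exact (hx2 (j2:ℕ) j2.isLt (j1:ℕ) h) (hxe ▸ hx1 (j1:ℕ) j1.isLt)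
    · exact hnej (Fin.ext h)
    · exact (hx2 (j1:ℕ) j1.isLt (j2:ℕ) h) (hxe ▸ hx1 (j2:ℕ) j2.isLt)
  have hXbij : Function.Bijective (fun j : Fin n => x (j : ℕ)) :=
    (Fintype.bijective_iff_injective_and_card _).2 ⟨hXinj, by simp [hcard']⟩
  set EX : Fin n ≃ V' := Equiv.ofBijective _ hXbij with hEXdef
  -- the top sum forces the weights
  have htop' : ∃ Bt : Finset V', ∑ v ∈ Bt, c' v = 2^n - 1 := by
    have h := htop
    rw [hEq] at h
    obtain ⟨Bt, _, _, hBt⟩ := h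
    exact ⟨Bt, hBt⟩
  obtain ⟨Bt, hBt⟩ := htop'
  have hle : ∀ j : Fin n, c' (EX j) ≤ 2^((j:ℕ)) := by
    intro j
    have h1 : c' (x (j:ℕ)) ≤ ∑ a ∈ B (j:ℕ), c' a :=
      Finset.single_le_sum (fun i _ => Nat.zero_le _) (hx1 (j:ℕ) j.isLt)
    rw [hB (j:ℕ) j.isLt] at h1
    exact h1
  have hsum1 : ∑ j : Fin n, c' (EX j) = ∑ v' : V', c' v' := Equiv.sum_comp EX c'
  have hpow : ∑ j : Fin n, 2^((j:ℕ)) = 2^n - 1 := by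
    rw [Fin.sum_univ_eq_sum_range (fun i => 2^i) n, stp']
  have hub : ∑ j : Fin n, c' (EX j) ≤ 2^n - 1 := by
    calc ∑ j : Fin n, c' (EX j) ≤ ∑ j : Fin n, 2^((j:ℕ)) :=
          Finset.sum_le_sum (fun i _ => hle i)
      _ = 2^n - 1 := hpow
  have hlb : 2^n - 1 ≤ ∑ v' : V', c' v' := by
    rw [← hBt]
    exact Finset.sum_le_sum_of_subset (Finset.subset_univ _)
  have heq : ∑ j : Fin n, c' (EX j) = ∑ j : Fin n, 2^((j:ℕ)) := by omega
  have hXval : ∀ j : Fin n, c' (EX j) = 2^((j:ℕ)) := by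
    intro j
    exact (Finset.sum_eq_sum_iff_of_le (fun i _ => hle i)).1 heq j (Finset.mem_univ j)
  -- injectivity of subset sums on the G' side
  have hc'rw : ∀ v', c' v' = 2^(((EX.symm v' : Fin n) : ℕ)) := by
    intro v'
    have := hXval (EX.symm v')
    rwa [EX.apply_symm_apply] at this
  have injG' : ∀ s t : Finset V', ∑ v ∈ s, c' v = ∑ v ∈ t, c' v → s = t := by
    intro s t h
    refine sum_two_pow_inj (g := fun v' => ((EX.symm v' : Fin n) : ℕ))
      (fun a b hab => ?_) s t ?_
    · exact EX.symm.injective (Fin.val_injective hab)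
    · rw [← Finset.sum_congr rfl (fun v' _ => hc'rw v'), ← Finset.sum_congr rfl (fun v' _ => hc'rw v'), h]
  -- the isomorphism
  set Ef : V ≃ V' := e.trans EX with hEfdef
  have hcf : ∀ v, c' (Ef v) = c v := fun v => hXval (e v)
  have adj_iff : ∀ u v : V, G'.Adj (Ef u) (Ef v) ↔ G.Adj u v := by
    intro u v
    constructor
    · intro h'
      have hne' : Ef u ≠ Ef v := h'.ne
      have hnuv : u ≠ v := fun hh => hne' (congrArg Ef hh)
      have hmem : (c u + c v : ℕ) ∈ connSums G' c' := by
        refine ⟨{Ef u, Ef v}, Finset.insert_nonempty _ _, ?_, ?_⟩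
        · have hco : (↑({Ef u, Ef v} : Finset V') : Set V') = ({Ef u, Ef v} : Set V') := by simp
          rw [hco]
          exact (induce_pair_connected_iff G' hne').2 h'
        · rw [Finset.sum_pair hne', hcf, hcf]
      rw [← hEq] at hmem
      obtain ⟨s, _, hconn, hsum⟩ := hmem
      have hseq : s = {u, v} := injG s {u, v} (by rw [hsum, Finset.sum_pair hnuv])
      subst hseq
      have hco : (↑({u, v} : Finset V) : Set V) = ({u, v} : Set V) := by simp
      rw [hco] at hconn
      exact (induce_pair_connected_iff G hnuv).1 hconn
    · intro h
      have hnuv : u ≠ v := h.ne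
      have hne' : Ef u ≠ Ef v := fun hh => hnuv (Ef.injective hh)
      have hmem : (c u + c v : ℕ) ∈ connSums G c := by
        refine ⟨{u, v}, Finset.insert_nonempty _ _, ?_, ?_⟩
        · have hco : (↑({u, v} : Finset V) : Set V) = ({u, v} : Set V) := by simp
          rw [hco]
          exact (induce_pair_connected_iff G hnuv).2 h
        · rw [Finset.sum_pair hnuv]
      rw [hEq] at hmem
      obtain ⟨s, _, hconn, hsum⟩ := hmem
      have hseq : s = {Ef u, Ef v} := by
        refine injG' s {Ef u, Ef v} ?_
        rw [hsum, Finset.sum_pair hne', hcf, hcf]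
      subst hseq
      have hco : (↑({Ef u, Ef v} : Finset V') : Set V') = ({Ef u, Ef v} : Set V') := by simp
      rw [hco] at hconn
      exact (induce_pair_connected_iff G' hne').1 hconn
  exact ⟨⟨Ef, fun {u v} => adj_iff u v⟩⟩
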